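/- Let L be a linear contraction on a finite-dimensional Banach space X whose peripheral eigenvalues (eigenvalues on the unit circle) are all simple, let P^j be the spectral (Riesz) projector of the peripheral eigenvalue e^j, P = Σ_j P^j the peripheral spectral projector, Q = Id − P, and assume spr(LQ) < 1 where spr is the spectral radius. Then: (1) for each j, ‖P^j‖ = 1 and ‖P‖ = 1, hence ‖PL‖ ≤ 1 and ‖Q‖ ≤ 2; (2) if moreover X = I_1(H) for a finite-dimensional Hilbert space H and L is completely positive and trace preserving (CPTP), then both P and PL are CPTP. -/

import Mathlib

open Matrix Finset Set
open scoped Kronecker ComplexOrder ENNReal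

namespace RISPaper

variable {nS nE N : Type*}

/-- Partial trace over the second (environment) factor. -/
noncomputable def ptraceE [Fintype nE] (A : Matrix (nS × nE) (nS × nE) ℂ) :
    Matrix nS nS ℂ := Matrix.of fun i j => ∑ k : nE, A (i, k) (j, k)

/-- Partial trace over the first (system) factor. -/
noncomputable def ptraceS [Fintype nS] (A : Matrix (nS × nE) (nS × nE) ℂ) :
    Matrix nE nE ℂ := Matrix.of fun i j => ∑ k : nS, A (k, i) (k, j)

/-- Logarithm of a Hermitian matrix, via the spectral decomposition (junk value `0`
on non-Hermitian matrices; eigenvalue `0` contributes `Real.log 0 = 0`). -/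
noncomputable def hlog [Fintype N] [DecidableEq N] (A : Matrix N N ℂ) : Matrix N N ℂ :=
  if hA : A.IsHermitian then
    (hA.eigenvectorUnitary : Matrix N N ℂ) *
      Matrix.diagonal (fun i => (Real.log (hA.eigenvalues i) : ℂ)) *
      (star (hA.eigenvectorUnitary : Matrix N N ℂ))
  else 0

/-- von Neumann entropy `S(η) = -Tr (η log η)`. -/
noncomputable def vnEntropy [Fintype N] [DecidableEq N] (A : Matrix N N ℂ) : ℝ :=
  (-(A * hlog A).trace).re

/-- Relative entropy `S(η|ν) = Tr (η (log η - log ν))`. -/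
noncomputable def relEntropy [Fintype N] [DecidableEq N] (A B : Matrix N N ℂ) : ℝ :=
  ((A * (hlog A - hlog B)).trace).re

/-- Gibbs state `exp(-βh)/Tr(exp(-βh))`. -/
noncomputable def gibbs [Fintype N] [DecidableEq N] (β : ℝ) (h : Matrix N N ℂ) : Matrix N N ℂ :=
  (NormedSpace.exp ((-β : ℂ) • h)).trace⁻¹ • NormedSpace.exp ((-β : ℂ) • h)

/-- A state: positive semidefinite with unit trace. -/
def IsState [Fintype N] (ρ : Matrix N N ℂ) : Prop := ρ.PosSemidef ∧ ρ.trace = 1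

/-- A faithful state: positive definite with unit trace. -/
def IsFaithfulState [Fintype N] (ρ : Matrix N N ℂ) : Prop := ρ.PosDef ∧ ρ.trace = 1

/-- Trace norm `‖A‖₁ = Tr √(AᴴA)`. -/
noncomputable def traceNorm [Fintype N] [DecidableEq N] (A : Matrix N N ℂ) : ℝ :=
  ((((Matrix.posSemidef_conjTranspose_mul_self A).1.eigenvectorUnitary : Matrix N N ℂ) *
    Matrix.diagonal (fun i => (Real.sqrt ((Matrix.posSemidef_conjTranspose_mul_self A).1.eigenvalues i) : ℂ)) *
    (star (Matrix.posSemidef_conjTranspose_mul_self A).1.eigenvectorUnitary : Matrix N N ℂ))).trace.re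

/-- Operator (ℓ²→ℓ²) norm of a matrix. -/
noncomputable def opNorm [Fintype N] [DecidableEq N] (A : Matrix N N ℂ) : ℝ :=
  ‖LinearMap.toContinuousLinearMap (Matrix.toEuclideanLin A)‖

/-- Operator norm of a map on matrices, with respect to the trace norm. -/
noncomputable def mapTNorm [Fintype N] [DecidableEq N]
    (f : Matrix N N ℂ → Matrix N N ℂ) : ℝ :=
  sSup ((fun A => traceNorm (f A)) '' {A | traceNorm A ≤ 1})

/-- The smallest point of the spectrum of a Hermitian matrix (junk value `0` otherwise). -/
noncomputable def infSpec [Fintype N] [DecidableEq N] [Nonempty N] (A : Matrix N N ℂ) : ℝ :=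
  if hA : A.IsHermitian then ⨅ i, hA.eigenvalues i else 0

/-- Amplification `Φ ⊗ id_k` of a map on matrices. -/
noncomputable def amp [Fintype N] (Φ : Matrix N N ℂ → Matrix N N ℂ) (k : ℕ)
    (M : Matrix (N × Fin k) (N × Fin k) ℂ) : Matrix (N × Fin k) (N × Fin k) ℂ :=
  Matrix.of fun p q => Φ (Matrix.of fun i j => M (i, p.2) (j, q.2)) p.1 q.1

/-- Complete positivity. -/
def IsCompletelyPositive [Fintype N] (Φ : Matrix N N ℂ → Matrix N N ℂ) : Prop :=
  ∀ (k : ℕ) (M : Matrix (N × Fin k) (N × Fin k) ℂ), M.PosSemidef → (amp Φ k M).PosSemidef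

/-- Trace preservation. -/
def IsTracePreserving [Fintype N] (Φ : Matrix N N ℂ → Matrix N N ℂ) : Prop :=
  ∀ A, (Φ A).trace = A.trace

/-- CPTP (quantum channel). -/
def IsCPTP [Fintype N] (Φ : Matrix N N ℂ → Matrix N N ℂ) : Prop :=
  IsCompletelyPositive Φ ∧ IsTracePreserving Φ

/-- Irreducibility of a map on matrices: the only invariant hereditary subalgebras are
trivial. -/
def IsIrreducible [Fintype N] [DecidableEq N] (Φ : Matrix N N ℂ → Matrix N N ℂ) : Prop :=
  ∀ p : Matrix N N ℂ, p.IsHermitian → p * p = p →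
    (∀ A, Φ (p * A * p) = p * Φ (p * A * p) * p) → p = 0 ∨ p = 1

/-- The divided-difference kernel entering the Hessian of relative entropy. -/
noncomputable def ddKernel (x y : ℝ) : ℝ :=
  if x = y then 1 / (2 * x) else (Real.log x - Real.log y) / (2 * (x - y))

/-- The quadratic form `F_η(A,B)` of the paper (second-order expansion of relative entropy
around the faithful state `η`), written via the eigendecomposition of `η`. -/
noncomputable def Fq [Fintype N] [DecidableEq N] (η A B : Matrix N N ℂ) : ℝ :=
  if hη : η.IsHermitian then
    (∑ a : N, ∑ b : N,
      (ddKernel (hη.eigenvalues a) (hη.eigenvalues b) : ℂ) *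
        ((star (hη.eigenvectorUnitary : Matrix N N ℂ) * A *
            (hη.eigenvectorUnitary : Matrix N N ℂ)) b a *
         (star (hη.eigenvectorUnitary : Matrix N N ℂ) * B *
            (hη.eigenvectorUnitary : Matrix N N ℂ)) a b)).re
  else 0

/-- Ordered product `f k * f (k-1) * ⋯ * f 1` (equal to `1` for `k = 0`). -/
noncomputable def opProd {α : Type*} [Monoid α] (f : ℕ → α) : ℕ → α
  | 0 => 1
  | k + 1 => f (k + 1) * opProd f k

/-- `P` is the spectral projection of `L` associated with the peripheral part of the
spectrum (eigenvalues of modulus one). -/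
def IsPeripheralProj {X : Type*} [NormedAddCommGroup X] [NormedSpace ℂ X]
    (L P : X →L[ℂ] X) : Prop :=
  P * P = P ∧ L * P = P * L ∧
    (LinearMap.range (P : X →ₗ[ℂ] X) =
      ⨆ z ∈ {z : ℂ | ‖z‖ = 1}, Module.End.maxGenEigenspace (L : X →ₗ[ℂ] X) z) ∧
    (LinearMap.ker (P : X →ₗ[ℂ] X) =
      ⨆ z ∈ {z : ℂ | ‖z‖ ≠ 1}, Module.End.maxGenEigenspace (L : X →ₗ[ℂ] X) z)

/-- `P` is the spectral projection of `L` associated with the eigenvalue `z`. -/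
def IsSpectralProjAt {X : Type*} [NormedAddCommGroup X] [NormedSpace ℂ X]
    (L P : X →L[ℂ] X) (z : ℂ) : Prop :=
  P * P = P ∧ L * P = P * L ∧
    (LinearMap.range (P : X →ₗ[ℂ] X) =
      Module.End.maxGenEigenspace (L : X →ₗ[ℂ] X) z) ∧
    (LinearMap.ker (P : X →ₗ[ℂ] X) =
      ⨆ w ∈ {w : ℂ | w ≠ z}, Module.End.maxGenEigenspace (L : X →ₗ[ℂ] X) w)



open Filter Topology in
lemma aux_tendsto_pow_norm_zero {A : Type*} [NormedRing A] [NormedAlgebra ℂ A] [CompleteSpace A]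
    (a : A) (h : spectralRadius ℂ a < 1) : Tendsto (fun n : ℕ => ‖a ^ n‖) atTop (𝓝 0) := by
  obtain ⟨r, hr1, hr2⟩ := exists_between h
  have hrtop : r ≠ ⊤ := (hr2.trans_le le_top).ne
  have htends := spectrum.pow_nnnorm_pow_one_div_tendsto_nhds_spectralRadius a
  have hev : ∀ᶠ n : ℕ in atTop, (‖a ^ n‖₊ : ℝ≥0∞) ^ (1 / (n:ℝ)) < r :=
    htends.eventually_lt_const hr1
  rw [eventually_atTop] at hev
  obtain ⟨N, hN⟩ := hev
  have hrn : r.toNNReal < 1 := by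
    rw [← ENNReal.coe_lt_one_iff, ENNReal.coe_toNNReal hrtop]; exact hr2
  have key : ∀ n ≥ max N 1, ‖a ^ n‖ ≤ (r.toNNReal : ℝ) ^ n := by
    intro n hn
    have hn1 : 1 ≤ n := le_of_max_le_right hn
    have h1 := hN n (le_of_max_le_left hn)
    have hne : (n : ℝ) ≠ 0 := by positivity
    have h2 : ((‖a ^ n‖₊ : ℝ≥0∞) ^ (1 / (n:ℝ))) ^ (n : ℝ) ≤ r ^ (n : ℝ) :=
      ENNReal.rpow_le_rpow h1.le (by positivity)
    rw [← ENNReal.rpow_mul, one_div, inv_mul_cancel₀ hne, ENNReal.rpow_one] at h2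
    have h3 : (‖a ^ n‖₊ : ℝ≥0∞) ≤ (r.toNNReal : ℝ≥0∞) ^ (n:ℝ) := by
      rwa [ENNReal.coe_toNNReal hrtop]
    rw [ENNReal.rpow_natCast] at h3
    rw [← ENNReal.coe_pow, ENNReal.coe_le_coe] at h3
    exact_mod_cast h3
  have hgeo : Tendsto (fun n : ℕ => (r.toNNReal : ℝ) ^ n) atTop (𝓝 0) :=
    tendsto_pow_atTop_nhds_zero_of_lt_one (by positivity) hrn
  refine squeeze_zero' (Eventually.of_forall fun n => norm_nonneg _) ?_ hgeo
  rw [eventually_atTop]; exact ⟨max N 1, key⟩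

lemma aux_tele {z : ℂ} (hz : ‖z‖ = 1) : ∀ m : ℕ, ‖z ^ m - 1‖ ≤ m * ‖z - 1‖ := by
  intro m
  induction m with
  | zero => simp
  | succ k ih =>
    have hzz : z ^ (k+1) - 1 = (z ^ k - 1) * z + (z - 1) := by ring
    rw [hzz]
    calc ‖(z ^ k - 1) * z + (z - 1)‖ ≤ ‖(z ^ k - 1) * z‖ + ‖z - 1‖ := norm_add_le _ _
    _ = ‖z ^ k - 1‖ + ‖z - 1‖ := by rw [norm_mul, hz, mul_one]
    _ ≤ k * ‖z - 1‖ + ‖z - 1‖ := by gcongr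
    _ = (k+1 : ℕ) * ‖z - 1‖ := by push_cast; ring

open Filter Topology in
lemma aux_recur {J : Type*} [Fintype J] (e : J → ℂ) (he : ∀ j, ‖e j‖ = 1)
    {ε : ℝ} (hε : 0 < ε) (B : ℕ) :
    ∃ k : ℕ, B ≤ k ∧ 1 ≤ k ∧ ∀ j, ‖e j ^ k - 1‖ < ε := by
  have main : ∀ δ : ℝ, 0 < δ → ∃ k₀ : ℕ, 1 ≤ k₀ ∧ ∀ j, ‖e j ^ k₀ - 1‖ < δ := by
    intro δ hδ
    set x : ℕ → (J → ℂ) := fun n j => e j ^ n with hx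
    have hxb : ∀ n, x n ∈ Metric.closedBall (0 : J → ℂ) 1 := by
      intro n
      rw [Metric.mem_closedBall, dist_zero_right]
      refine pi_norm_le_iff_of_nonneg zero_le_one |>.mpr fun j => ?_
      rw [norm_pow, he j, one_pow]
    obtain ⟨a, -, ψ, hψ, hconv⟩ :=
      tendsto_subseq_of_bounded Metric.isBounded_closedBall hxb
    have hcauchy : CauchySeq (x ∘ ψ) := hconv.cauchySeq
    rw [Metric.cauchySeq_iff] at hcauchy
    obtain ⟨N, hN⟩ := hcauchy δ hδ
    have hd := hN (N+1) (by omega) N (by omega)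
    have hmono : ψ N < ψ (N+1) := hψ (by omega)
    refine ⟨ψ (N+1) - ψ N, by omega, fun j => ?_⟩
    have h1 : ‖e j ^ ψ (N+1) - e j ^ ψ N‖ < δ := by
      calc ‖e j ^ ψ (N+1) - e j ^ ψ N‖ = dist (x (ψ (N+1)) j) (x (ψ N) j) := by
            rw [dist_eq_norm]
      _ ≤ dist (x (ψ (N+1))) (x (ψ N)) := dist_le_pi_dist _ _ j
      _ < δ := hd
    have h2 : e j ^ ψ (N+1) - e j ^ ψ N = (e j ^ (ψ (N+1) - ψ N) - 1) * e j ^ ψ N := by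
      rw [sub_mul, one_mul, ← pow_add]
      congr 2
      omega
    rw [h2, norm_mul, norm_pow, he j, one_pow, mul_one] at h1
    exact h1
  obtain ⟨k₀, hk₁, hk₂⟩ := main (ε / (B + 1)) (by positivity)
  refine ⟨(B + 1) * k₀, by nlinarith, by nlinarith, fun j => ?_⟩
  calc ‖e j ^ ((B+1) * k₀) - 1‖ = ‖(e j ^ k₀) ^ (B+1) - 1‖ := by rw [← pow_mul, mul_comm]
  _ ≤ ((B+1 : ℕ) : ℝ) * ‖e j ^ k₀ - 1‖ := aux_tele (by rw [norm_pow, he j, one_pow]) (B+1)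
  _ = ((B:ℝ)+1) * ‖e j ^ k₀ - 1‖ := by push_cast; ring
  _ < ((B:ℝ)+1) * (ε / (B+1)) := by
      have hB : (0:ℝ) < (B:ℝ) + 1 := by positivity
      exact mul_lt_mul_of_pos_left (hk₂ j) hB
  _ = ε := by field_simp

lemma aux_isCPTP_id {n : Type*} [Fintype n] : IsCPTP (fun A : Matrix n n ℂ => A) := by
  constructor
  · intro k M hM
    have h : amp (fun A : Matrix n n ℂ => A) k M = M := rfl
    rwa [h]
  · intro A; rfl

lemma aux_isCPTP_comp {n : Type*} [Fintype n] {Φ Ψ : Matrix n n ℂ → Matrix n n ℂ}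
    (hΦ : IsCPTP Φ) (hΨ : IsCPTP Ψ) : IsCPTP (fun A => Φ (Ψ A)) := by
  constructor
  · intro k M hM
    have h : amp (fun A => Φ (Ψ A)) k M = amp Φ k (amp Ψ k M) := rfl
    rw [h]
    exact hΦ.1 k _ (hΨ.1 k M hM)
  · intro A
    rw [hΦ.2, hΨ.2]

open Filter Topology in
lemma aux_isCPTP_limit {X : Type*} [NormedAddCommGroup X] [NormedSpace ℂ X]
    [FiniteDimensional ℂ X] {n : Type*} [Fintype n] (φ : X ≃ₗ[ℂ] Matrix n n ℂ)
    (s : ℕ → (X →L[ℂ] X)) (T : X →L[ℂ] X)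
    (hs : Tendsto s atTop (𝓝 T))
    (h : ∀ m, IsCPTP (fun A => φ ((s m) (φ.symm A)))) :
    IsCPTP (fun A => φ (T (φ.symm A))) := by
  have hfun : ∀ (f : (X →L[ℂ] X) →ₗ[ℂ] ℂ),
      Tendsto (fun m => f (s m)) atTop (𝓝 (f T)) :=
    fun f => ((f.continuous_of_finiteDimensional).tendsto T).comp hs
  have hclosed : IsClosed {z : ℂ | 0 ≤ z} := by
    have hset : {z : ℂ | 0 ≤ z} = Complex.re ⁻¹' (Set.Ici 0) ∩ Complex.im ⁻¹' {0} := by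
      ext z
      simp only [Set.mem_setOf_eq, Set.mem_inter_iff, Set.mem_preimage, Set.mem_Ici,
        Set.mem_singleton_iff]
      rw [Complex.le_def]
      simp [eq_comm]
    rw [hset]
    exact (isClosed_Ici.preimage Complex.continuous_re).inter
      (isClosed_singleton.preimage Complex.continuous_im)
  constructor
  · intro k M hM
    let g : (n × Fin k) → (n × Fin k) → ((X →L[ℂ] X) →ₗ[ℂ] ℂ) := fun p q =>
      { toFun := fun T' => (φ (T' (φ.symm (Matrix.of fun i j => M (i, p.2) (j, q.2))))) p.1 q.1
        map_add' := by intros; simp [Matrix.add_apply]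
        map_smul' := by intros; simp [Matrix.smul_apply] }
    have hg : ∀ (T' : X →L[ℂ] X) p q,
        amp (fun A => φ (T' (φ.symm A))) k M p q = g p q T' := fun _ _ _ => rfl
    rw [Matrix.posSemidef_iff_dotProduct_mulVec]
    constructor
    · show (amp (fun A => φ (T (φ.symm A))) k M)ᴴ = _
      refine Matrix.ext fun p q => ?_
      rw [Matrix.conjTranspose_apply, hg, hg]
      have hm : ∀ m, star (g q p (s m)) = g p q (s m) := by
        intro m
        have hherm := ((h m).1 k M hM).1
        have := congrFun (congrFun hherm p) q
        rw [Matrix.conjTranspose_apply] at this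
        rw [← hg, ← hg]
        exact this
      have t1 : Tendsto (fun m => star (g q p (s m))) atTop (𝓝 (star (g q p T))) :=
        (continuous_star.tendsto _).comp (hfun (g q p))
      exact tendsto_nhds_unique (t1.congr hm) (hfun (g p q))
    · intro x
      let qf : (X →L[ℂ] X) →ₗ[ℂ] ℂ := ∑ p, ∑ q, (star (x p) * x q) • g p q
      have hqf : ∀ T', qf T' =
          dotProduct (star x) ((amp (fun A => φ (T' (φ.symm A))) k M) *ᵥ x) := by
        intro T'
        simp only [qf, LinearMap.sum_apply, LinearMap.smul_apply, smul_eq_mul,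
          dotProduct, Matrix.mulVec, Pi.star_apply, Finset.mul_sum]
        refine Finset.sum_congr rfl fun p _ => Finset.sum_congr rfl fun q _ => ?_
        rw [hg]
        ring
      have hm : ∀ m, qf (s m) ∈ {z : ℂ | 0 ≤ z} := by
        intro m
        rw [Set.mem_setOf_eq, hqf]
        exact (Matrix.posSemidef_iff_dotProduct_mulVec.mp ((h m).1 k M hM)).2 x
      have hmem := hclosed.mem_of_tendsto (hfun qf) (Eventually.of_forall hm)
      rw [Set.mem_setOf_eq, hqf] at hmem
      exact hmem
  · intro A
    let f : (X →L[ℂ] X) →ₗ[ℂ] ℂ :=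
      { toFun := fun T' => (φ (T' (φ.symm A))).trace
        map_add' := by intros; simp [Matrix.trace_add]
        map_smul' := by intros; simp [Matrix.trace_smul] }
    have hm : (fun m => f (s m)) = fun _ => A.trace := funext fun m => (h m).2 A
    have : f T = A.trace :=
      tendsto_nhds_unique (hfun f) (by rw [hm]; exact tendsto_const_nhds)
    exact this

set_option maxHeartbeats 1000000

/-- **Norm bounds for peripheral spectral projections of a contraction** (and preservation
of the CPTP property): if `L` is a contraction on a finite-dimensional Banach space whose
peripheral eigenvalues `e j` are simple, with (Riesz) spectral projections `P j`, and the
strictly contracting part `L Q` has spectral radius `< 1`, then `‖P j‖ = 1`, `‖P‖ = 1`,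
`‖P L‖ ≤ 1`, `‖Q‖ ≤ 2`; moreover if, under an identification of `X` with the trace class
operators on a finite-dimensional Hilbert space, `L` is CPTP, then so are `P` and `P L`. -/
theorem peripheral_projection_bounds_and_CPTP
    {X : Type*} [NormedAddCommGroup X] [NormedSpace ℂ X] [FiniteDimensional ℂ X]
    [Nontrivial X]
    (L : X →L[ℂ] X) (hL : ‖L‖ ≤ 1)
    {J : Type*} [Fintype J] [Nonempty J]
    (e : J → ℂ) (P : J → (X →L[ℂ] X)) (Q : X →L[ℂ] X)
    (he_unit : ∀ j, ‖e j‖ = 1)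
    (he_inj : Function.Injective e)
    (hP_idem : ∀ j, P j * P j = P j)
    (hP_comm : ∀ j, L * P j = P j * L)
    (hP_eig : ∀ j, L * P j = e j • P j)
    (hP_disj : ∀ i j, i ≠ j → P i * P j = 0)
    (hP_rank : ∀ j, Module.finrank ℂ (LinearMap.range ((P j : X →ₗ[ℂ] X))) = 1)
    (hQ : Q = 1 - ∑ j, P j)
    (hspr : spectralRadius ℂ (L * Q) < 1) :
    (∀ j, ‖P j‖ = 1) ∧ ‖∑ j, P j‖ = 1 ∧ ‖(∑ j, P j) * L‖ ≤ 1 ∧ ‖Q‖ ≤ 2 ∧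
    (∀ (n : Type) [Fintype n] [DecidableEq n] (φ : X ≃ₗ[ℂ] Matrix n n ℂ),
      IsCPTP (fun A => φ (L (φ.symm A))) →
        IsCPTP (fun A => φ ((∑ j, P j) (φ.symm A))) ∧
        IsCPTP (fun A => φ (((∑ j, P j) * L) (φ.symm A)))) := by
  classical
  have hej_ne : ∀ j, e j ≠ 0 := fun j h => by simpa [h] using he_unit j
  have hPj_ne : ∀ j, P j ≠ 0 := by
    intro j hj
    have hr := hP_rank j
    rw [hj] at hr
    rw [ContinuousLinearMap.coe_zero, LinearMap.range_zero, finrank_bot] at hr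
    exact absurd hr zero_ne_one
  have hPtPj : ∀ j, (∑ i, P i) * P j = P j := by
    intro j
    rw [Finset.sum_mul, Finset.sum_eq_single j (fun i _ hij => hP_disj i j hij) (by simp)]
    exact hP_idem j
  have hPtIdem : (∑ j, P j) * (∑ j, P j) = ∑ j, P j := by
    rw [Finset.mul_sum]
    exact Finset.sum_congr rfl fun j _ => hPtPj j
  have hLPt : L * (∑ j, P j) = (∑ j, P j) * L := by
    rw [Finset.mul_sum, Finset.sum_mul]
    exact Finset.sum_congr rfl fun j _ => hP_comm j
  have hQL : L * Q = Q * L := by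
    rw [hQ, mul_sub, sub_mul, mul_one, one_mul, hLPt]
  have hQidem : Q * Q = Q := by
    have hh : (1 - ∑ j, P j) * (1 - ∑ j, P j)
        = 1 - (∑ j, P j) - (∑ j, P j) + (∑ j, P j) * (∑ j, P j) := by noncomm_ring
    rw [hQ, hh, hPtIdem]
    abel
  have hLkPj : ∀ (k : ℕ) j, L ^ k * P j = (e j ^ k) • P j := by
    intro k j
    induction k with
    | zero => simp
    | succ m ih =>
      rw [pow_succ, mul_assoc, hP_eig j, mul_smul_comm, ih, smul_smul, ← pow_succ']
  have hRk : ∀ k : ℕ, (L * Q) ^ (k + 1) = L ^ (k + 1) * Q := by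
    intro k
    induction k with
    | zero => simp [pow_one]
    | succ m ih =>
      rw [pow_succ, ih]
      have h1 : L ^ (m+1) * Q * (L * Q) = L ^ (m+1) * (Q * L) * Q := by noncomm_ring
      rw [h1, ← hQL]
      have h2 : L ^ (m+1) * (L * Q) * Q = L ^ (m+1) * L * (Q * Q) := by noncomm_ring
      rw [h2, hQidem, ← pow_succ]
  have hone : (1 : X →L[ℂ] X) = (∑ j, P j) + Q := by
    rw [hQ]; abel
  have hKey : ∀ k : ℕ, L ^ (k+1) = (∑ j, (e j ^ (k+1)) • P j) + (L * Q) ^ (k+1) := by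
    intro k
    conv_lhs => rw [← mul_one (L ^ (k+1)), hone]
    rw [mul_add, Finset.mul_sum, ← hRk]
    congr 1
    exact Finset.sum_congr rfl fun j _ => hLkPj (k+1) j
  have hLk_norm : ∀ k : ℕ, ‖L ^ k‖ ≤ 1 := by
    intro k
    match k with
    | 0 => simp
    | (m+1) =>
      calc ‖L ^ (m+1)‖ ≤ ‖L‖ ^ (m+1) := norm_pow_le' L m.succ_pos
      _ ≤ 1 := pow_le_one₀ (norm_nonneg L) hL
  have hR0 : Filter.Tendsto (fun m : ℕ => ‖(L * Q) ^ m‖) Filter.atTop (nhds 0) :=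
    aux_tendsto_pow_norm_zero _ hspr
  choose Nn hN1 hN2 hN3 using fun m : ℕ =>
    aux_recur e he_unit (show (0:ℝ) < 1/(m+1) by positivity) m
  have hNtop : Filter.Tendsto Nn Filter.atTop Filter.atTop :=
    Filter.tendsto_atTop_mono hN1 Filter.tendsto_id
  have hconvPt : Filter.Tendsto (fun m => L ^ (Nn m)) Filter.atTop (nhds (∑ j, P j)) := by
    rw [tendsto_iff_norm_sub_tendsto_zero]
    have hb : ∀ m, ‖L ^ Nn m - ∑ j, P j‖ ≤
        (∑ j, ‖e j ^ Nn m - 1‖ * ‖P j‖) + ‖(L*Q) ^ Nn m‖ := by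
      intro m
      obtain ⟨k, hk⟩ : ∃ k, Nn m = k + 1 := ⟨Nn m - 1, by have := hN2 m; omega⟩
      rw [hk, hKey k]
      have hsub : ∑ j, (e j ^ (k+1) - 1) • P j
          = (∑ j, (e j ^ (k+1)) • P j) - ∑ j, P j := by
        rw [← Finset.sum_sub_distrib]
        exact Finset.sum_congr rfl fun j _ => by rw [sub_smul, one_smul]
      have hre : (∑ j, (e j ^ (k+1)) • P j) + (L*Q)^(k+1) - ∑ j, P j
          = (∑ j, (e j ^ (k+1) - 1) • P j) + (L*Q)^(k+1) := by
        rw [hsub]; abel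
      rw [hre]
      calc ‖(∑ j, (e j ^ (k+1) - 1) • P j) + (L*Q)^(k+1)‖
          ≤ ‖∑ j, (e j ^ (k+1) - 1) • P j‖ + ‖(L*Q)^(k+1)‖ := norm_add_le _ _
      _ ≤ (∑ j, ‖e j ^ (k+1) - 1‖ * ‖P j‖) + ‖(L*Q)^(k+1)‖ := by
          gcongr
          calc ‖∑ j, (e j ^ (k+1) - 1) • P j‖ ≤ ∑ j, ‖(e j ^ (k+1) - 1) • P j‖ :=
                norm_sum_le _ _
          _ = ∑ j, ‖e j ^ (k+1) - 1‖ * ‖P j‖ :=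
                Finset.sum_congr rfl fun j _ => norm_smul (e j ^ (k+1) - 1) (P j)
    refine squeeze_zero (fun m => norm_nonneg _) hb ?_
    have h1 : Filter.Tendsto (fun m => ∑ j, ‖e j ^ Nn m - 1‖ * ‖P j‖)
        Filter.atTop (nhds 0) := by
      have hz : (0:ℝ) = ∑ _j : J, 0 := by simp
      rw [hz]
      refine tendsto_finset_sum _ fun j _ => ?_
      have hsq : Filter.Tendsto (fun m => ‖e j ^ Nn m - 1‖) Filter.atTop (nhds 0) := by
        refine squeeze_zero (fun m => norm_nonneg _) (fun m => (hN3 m j).le) ?_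
        exact tendsto_one_div_add_atTop_nhds_zero_nat
      simpa using hsq.mul_const ‖P j‖
    have h2 : Filter.Tendsto (fun m => ‖(L*Q) ^ Nn m‖) Filter.atTop (nhds 0) :=
      hR0.comp hNtop
    simpa using h1.add h2
  have hPtle : ‖∑ j, P j‖ ≤ 1 :=
    le_of_tendsto hconvPt.norm (Filter.Eventually.of_forall fun m => hLk_norm (Nn m))
  have hPt_ne : (∑ j, P j) ≠ 0 := by
    intro h0
    obtain ⟨j⟩ := ‹Nonempty J›
    exact hPj_ne j (by rw [← hPtPj j, h0, zero_mul])
  have one_le_norm_of_idem : ∀ T : X →L[ℂ] X, T * T = T → T ≠ 0 → 1 ≤ ‖T‖ := by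
    intro T hT hT0
    have h1 : 0 < ‖T‖ := norm_pos_iff.mpr hT0
    have h2 := norm_mul_le T T
    rw [hT] at h2
    nlinarith
  have hPtnorm : ‖∑ j, P j‖ = 1 :=
    le_antisymm hPtle (one_le_norm_of_idem _ hPtIdem hPt_ne)
  have hPtL_norm : ‖(∑ j, P j) * L‖ ≤ 1 := by
    calc ‖(∑ j, P j) * L‖ ≤ ‖∑ j, P j‖ * ‖L‖ := norm_mul_le _ _
    _ ≤ 1 := by rw [hPtnorm, one_mul]; exact hL
  have hQnorm : ‖Q‖ ≤ 2 := by
    rw [hQ]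
    calc ‖(1 : X →L[ℂ] X) - ∑ j, P j‖ ≤ ‖(1 : X →L[ℂ] X)‖ + ‖∑ j, P j‖ := norm_sub_le _ _
    _ = 2 := by rw [norm_one, hPtnorm]; norm_num
  have hPjnorm : ∀ j, ‖P j‖ = 1 := by
    intro j
    refine le_antisymm ?_ (one_le_norm_of_idem _ (hP_idem j) (hPj_ne j))
    set Av : ℕ → (X →L[ℂ] X) := fun n =>
      ((n:ℂ))⁻¹ • ∑ k ∈ Finset.range n, ((e j)⁻¹ ^ (k+1)) • L ^ (k+1) with hAv
    have hAnorm : ∀ n : ℕ, 1 ≤ n → ‖Av n‖ ≤ 1 := by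
      intro n hn
      have hn0 : (0:ℝ) < n := by exact_mod_cast hn
      have hstep : ‖∑ k ∈ Finset.range n, ((e j)⁻¹ ^ (k+1)) • L ^ (k+1)‖ ≤ n := by
        calc ‖∑ k ∈ Finset.range n, ((e j)⁻¹ ^ (k+1)) • L ^ (k+1)‖
            ≤ ∑ k ∈ Finset.range n, ‖((e j)⁻¹ ^ (k+1)) • L ^ (k+1)‖ := norm_sum_le _ _
        _ ≤ ∑ _k ∈ Finset.range n, (1:ℝ) := by
            refine Finset.sum_le_sum fun k _ => ?_
            rw [norm_smul ((e j)⁻¹ ^ (k+1)) (L ^ (k+1)), norm_pow, norm_inv, he_unit j,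
              inv_one, one_pow, one_mul]
            exact hLk_norm (k+1)
        _ = n := by simp
      calc ‖Av n‖ = ‖((n:ℂ))⁻¹‖ * ‖∑ k ∈ Finset.range n, ((e j)⁻¹ ^ (k+1)) • L ^ (k+1)‖ :=
            norm_smul ((n:ℂ))⁻¹ (∑ k ∈ Finset.range n, ((e j)⁻¹ ^ (k+1)) • L ^ (k+1))
      _ = (n:ℝ)⁻¹ * ‖∑ k ∈ Finset.range n, ((e j)⁻¹ ^ (k+1)) • L ^ (k+1)‖ := by
            rw [norm_inv, Complex.norm_natCast]
      _ ≤ (n:ℝ)⁻¹ * n := by gcongr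
      _ = 1 := by field_simp
    set c : J → ℕ → ℂ := fun i n =>
      ((n:ℂ))⁻¹ * ∑ k ∈ Finset.range n, (e i * (e j)⁻¹) ^ (k+1) with hc
    have hdecomp : ∀ n : ℕ, Av n = (∑ i, c i n • P i) +
        ((n:ℂ))⁻¹ • ∑ k ∈ Finset.range n, ((e j)⁻¹ ^ (k+1)) • (L*Q)^(k+1) := by
      intro n
      have e1 : ∀ k : ℕ, ((e j)⁻¹ ^ (k+1)) • L ^ (k+1)
          = (∑ i, ((e i * (e j)⁻¹) ^ (k+1)) • P i) + ((e j)⁻¹ ^ (k+1)) • (L*Q)^(k+1) := by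
        intro k
        rw [hKey k, smul_add, Finset.smul_sum]
        congr 1
        refine Finset.sum_congr rfl fun i _ => ?_
        rw [smul_smul, mul_pow, mul_comm]
      show ((n:ℂ))⁻¹ • ∑ k ∈ Finset.range n, ((e j)⁻¹ ^ (k+1)) • L ^ (k+1) = _
      rw [Finset.sum_congr rfl fun k _ => e1 k, Finset.sum_add_distrib, smul_add]
      congr 1
      rw [Finset.sum_comm, Finset.smul_sum]
      refine Finset.sum_congr rfl fun i _ => ?_
      rw [← Finset.sum_smul, smul_smul]
    have hcj : ∀ n : ℕ, 1 ≤ n → c j n = 1 := by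
      intro n hn
      have hn0 : (n:ℂ) ≠ 0 := Nat.cast_ne_zero.mpr (by omega)
      rw [hc]
      simp only [mul_inv_cancel₀ (hej_ne j), one_pow, Finset.sum_const,
        Finset.card_range, nsmul_eq_mul, mul_one]
      exact inv_mul_cancel₀ hn0
    have hsumconv : Filter.Tendsto (fun n => ∑ i, c i n • P i) Filter.atTop (nhds (P j)) := by
      have hPj_eq : P j = ∑ i, (if i = j then P j else 0) := by
        rw [Finset.sum_ite_eq' Finset.univ j (fun _ => P j)]
        simp
      rw [hPj_eq]
      refine tendsto_finset_sum _ fun i _ => ?_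
      by_cases hij : i = j
      · subst hij
        simp only [if_pos rfl]
        refine Filter.Tendsto.congr' ?_ tendsto_const_nhds
        rw [Filter.eventuallyEq_iff_exists_mem]
        refine ⟨{n | 1 ≤ n}, Filter.mem_atTop 1, fun n hn => ?_⟩
        show P i = c i n • P i
        rw [hcj n hn, one_smul]
      · simp only [if_neg hij]
        have hμ1 : e i * (e j)⁻¹ ≠ 1 := fun h =>
          hij (he_inj ((mul_inv_eq_one₀ (hej_ne j)).mp h))
        have hμn : ‖e i * (e j)⁻¹‖ = 1 := by
          rw [norm_mul, norm_inv, he_unit, he_unit, inv_one, mul_one]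
        have hc0 : Filter.Tendsto (fun n => c i n) Filter.atTop (nhds (0:ℂ)) := by
          rw [tendsto_zero_iff_norm_tendsto_zero]
          have hden : (0:ℝ) < ‖e i * (e j)⁻¹ - 1‖ :=
            norm_pos_iff.mpr (sub_ne_zero.mpr hμ1)
          refine squeeze_zero (g := fun n : ℕ => (n:ℝ)⁻¹ * (2 / ‖e i * (e j)⁻¹ - 1‖))
            (fun n => norm_nonneg _) (fun n => ?_) ?_
          · show ‖((n:ℂ))⁻¹ * ∑ k ∈ Finset.range n, (e i * (e j)⁻¹) ^ (k+1)‖ ≤ _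
            have hsum : ∑ k ∈ Finset.range n, (e i * (e j)⁻¹) ^ (k+1)
                = (e i * (e j)⁻¹) * (((e i * (e j)⁻¹) ^ n - 1) / (e i * (e j)⁻¹ - 1)) := by
              rw [Finset.sum_congr rfl fun k _ => pow_succ' (e i * (e j)⁻¹) k,
                ← Finset.mul_sum, geom_sum_eq hμ1]
            have hnum : ‖((e i * (e j)⁻¹) ^ n - 1)‖ ≤ 2 := by
              calc ‖(e i * (e j)⁻¹) ^ n - 1‖ ≤ ‖(e i * (e j)⁻¹) ^ n‖ + ‖(1:ℂ)‖ :=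
                    norm_sub_le _ _
              _ = 2 := by rw [norm_pow, hμn, one_pow, norm_one]; norm_num
            rw [norm_mul, norm_inv, Complex.norm_natCast, hsum, norm_mul, hμn, one_mul,
              norm_div]
            have hmono : ‖(e i * (e j)⁻¹) ^ n - 1‖ / ‖e i * (e j)⁻¹ - 1‖
                ≤ 2 / ‖e i * (e j)⁻¹ - 1‖ := by gcongr
            have hinv : (0:ℝ) ≤ (n:ℝ)⁻¹ := by positivity
            exact mul_le_mul_of_nonneg_left hmono hinv
          · simpa using
              tendsto_inv_atTop_nhds_zero_nat.mul_const (2 / ‖e i * (e j)⁻¹ - 1‖)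
        simpa using hc0.smul_const (P i)
    have hrem : Filter.Tendsto (fun n : ℕ =>
        ((n:ℂ))⁻¹ • ∑ k ∈ Finset.range n, ((e j)⁻¹ ^ (k+1)) • (L*Q)^(k+1))
        Filter.atTop (nhds 0) := by
      rw [tendsto_zero_iff_norm_tendsto_zero]
      have hces : Filter.Tendsto
          (fun n : ℕ => (n:ℝ)⁻¹ • ∑ k ∈ Finset.range n, ‖(L*Q)^(k+1)‖)
          Filter.atTop (nhds 0) := by
        have hsh : Filter.Tendsto (fun k : ℕ => ‖(L*Q)^(k+1)‖) Filter.atTop (nhds 0) :=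
          hR0.comp (Filter.tendsto_add_atTop_nat 1)
        simpa using hsh.cesaro
      refine squeeze_zero (fun n => norm_nonneg _) (fun n => ?_) hces
      rw [norm_smul ((n:ℂ))⁻¹ (∑ k ∈ Finset.range n, ((e j)⁻¹ ^ (k+1)) • (L*Q)^(k+1)),
        norm_inv, Complex.norm_natCast, smul_eq_mul]
      gcongr
      calc ‖∑ k ∈ Finset.range n, ((e j)⁻¹ ^ (k+1)) • (L*Q)^(k+1)‖
          ≤ ∑ k ∈ Finset.range n, ‖((e j)⁻¹ ^ (k+1)) • (L*Q)^(k+1)‖ := norm_sum_le _ _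
      _ = ∑ k ∈ Finset.range n, ‖(L*Q)^(k+1)‖ := by
          refine Finset.sum_congr rfl fun k _ => ?_
          rw [norm_smul ((e j)⁻¹ ^ (k+1)) ((L*Q) ^ (k+1)), norm_pow, norm_inv, he_unit j,
            inv_one, one_pow, one_mul]
    have hAconv : Filter.Tendsto Av Filter.atTop (nhds (P j)) := by
      have := hsumconv.add hrem
      rw [add_zero] at this
      exact this.congr fun n => (hdecomp n).symm
    refine le_of_tendsto hAconv.norm ?_
    rw [Filter.eventually_atTop]
    exact ⟨1, hAnorm⟩
  refine ⟨hPjnorm, hPtnorm, hPtL_norm, hQnorm, ?_⟩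
  intro n _ _ φ hCPTP
  have hpow : ∀ k : ℕ, IsCPTP (fun A => φ ((L ^ k) (φ.symm A))) := by
    intro k
    induction k with
    | zero =>
      have heq : (fun A => φ ((L ^ 0) (φ.symm A))) = fun A : Matrix n n ℂ => A := by
        funext A
        simp
      rw [heq]
      exact aux_isCPTP_id
    | succ m ih =>
      have heq : (fun A => φ ((L ^ (m+1)) (φ.symm A)))
          = fun A => φ (L (φ.symm (φ ((L ^ m) (φ.symm A))))) := by
        funext A
        rw [LinearEquiv.symm_apply_apply, pow_succ', ContinuousLinearMap.mul_apply]
      rw [heq]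
      exact aux_isCPTP_comp hCPTP ih
  constructor
  · exact aux_isCPTP_limit φ _ _ hconvPt (fun m => hpow (Nn m))
  · have hconv2 : Filter.Tendsto (fun m => L ^ (Nn m) * L) Filter.atTop
        (nhds ((∑ j, P j) * L)) := hconvPt.mul tendsto_const_nhds
    refine aux_isCPTP_limit φ (fun m => L ^ (Nn m) * L) ((∑ j, P j) * L) hconv2
      (fun m => ?_)
    show IsCPTP (fun A => φ ((L ^ (Nn m) * L) (φ.symm A)))
    have heq : (fun A => φ ((L ^ (Nn m) * L) (φ.symm A)))
        = fun A => φ ((L ^ (Nn m + 1)) (φ.symm A)) := by rw [pow_succ]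
    rw [heq]
    exact hpow _


end RISPaper
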